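/- Let β₂ < 0 < 1 < β₁ and L > 0, and define V(x) = (L−a*)(x/a*)^{β₂} for x ≥ a* where a* = β₂L/(β₂−1). Then V is strictly decreasing and strictly convex on [a*, ∞), V(x) → 0 as x → ∞, and V(x) > (L − x) for all x > a*. -/

import Mathlib

open Real Set Filter

/-- the candidate put value `V(x) = (L−a*)(x/a*)^{β₂}` is strictly decreasing
and strictly convex on `[a*,∞)`, tends to `0` at infinity, and strictly dominates the payoff
`L − x` on `(a*,∞)`. -/
theorem put_value_properties (β₁ β₂ L a : ℝ) (V : ℝ → ℝ)
    (hβ₂ : β₂ < 0) (hβ₁ : 1 < β₁) (hL : 0 < L)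
    (ha : a = β₂ * L / (β₂ - 1))
    (hV : ∀ x : ℝ, V x = (L - a) * (x / a) ^ β₂) :
    StrictAntiOn V (Set.Ici a) ∧
      StrictConvexOn ℝ (Set.Ici a) V ∧
      Filter.Tendsto V Filter.atTop (nhds 0) ∧
      ∀ x : ℝ, a < x → L - x < V x := by
  have hb1 : β₂ - 1 < 0 := by linarith
  have ha0 : 0 < a := by
    rw [ha]; exact div_pos_of_neg_of_neg (by nlinarith) hb1
  have haL : a < L := by
    rw [ha, div_lt_iff_of_neg hb1]; nlinarith
  have hc : 0 < L - a := by linarith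
  -- key algebra : (L - a) * β₂ = -a
  have hne : β₂ - 1 ≠ 0 := ne_of_lt hb1
  have hkey : (L - a) * β₂ = -a := by
    rw [ha]; field_simp; ring
  -- derivative of V at any x > 0
  have hderiv : ∀ x : ℝ, 0 < x → HasDerivAt V (-(x / a) ^ (β₂ - 1)) x := by
    intro x hx
    have hxa : 0 < x / a := div_pos hx ha0
    have h1 : HasDerivAt (fun y : ℝ => y / a) (1 / a) x := by
      simpa using (hasDerivAt_id x).div_const a
    have h2 : HasDerivAt (fun t : ℝ => t ^ β₂) (β₂ * (x / a) ^ (β₂ - 1)) (x / a) :=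
      Real.hasDerivAt_rpow_const (Or.inl (ne_of_gt hxa))
    have h3 := (h2.comp x h1).const_mul (L - a)
    have : V = fun x => (L - a) * (x / a) ^ β₂ := funext hV
    rw [this]
    refine h3.congr_deriv ?_
    rw [show (L - a) * (β₂ * (x / a) ^ (β₂ - 1) * (1 / a)) =
      ((L - a) * β₂) * (x / a) ^ (β₂ - 1) / a by ring, hkey]
    field_simp
  have hderiveq : ∀ x : ℝ, 0 < x → deriv V x = -(x / a) ^ (β₂ - 1) := fun x hx =>
    (hderiv x hx).deriv
  have hcont : ContinuousOn V (Set.Ici a) := fun x hx =>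
    ((hderiv x (lt_of_lt_of_le ha0 hx)).continuousAt).continuousWithinAt
  have hint : interior (Set.Ici a) = Set.Ioi a := interior_Ici
  constructor
  · -- strict anti
    apply strictAntiOn_of_deriv_neg (convex_Ici a) hcont
    intro x hx
    rw [hint] at hx
    have hx0 : 0 < x := lt_trans ha0 hx
    rw [hderiveq x hx0]
    have : 0 < (x / a) ^ (β₂ - 1) := Real.rpow_pos_of_pos (div_pos hx0 ha0) _
    linarith
  refine ⟨?_, ?_, ?_⟩
  · -- strict convex
    apply StrictMonoOn.strictConvexOn_of_deriv (convex_Ici a) hcont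
    rw [hint]
    intro x hx y hy hxy
    have hx0 : 0 < x := lt_trans ha0 hx
    have hy0 : 0 < y := lt_trans ha0 hy
    rw [hderiveq x hx0, hderiveq y hy0, neg_lt_neg_iff]
    exact Real.rpow_lt_rpow_of_neg (div_pos hx0 ha0) (by gcongr) hb1
  · -- tendsto 0
    have h1 : Tendsto (fun x : ℝ => x / a) atTop atTop :=
      tendsto_id.atTop_div_const ha0
    have h2 : Tendsto (fun t : ℝ => t ^ β₂) atTop (nhds 0) := by
      have := tendsto_rpow_neg_atTop (y := -β₂) (by linarith)
      simpa using this
    have h3 := (h2.comp h1).const_mul (L - a)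
    simp only [Function.comp, mul_zero] at h3
    have : V = fun x => (L - a) * (x / a) ^ β₂ := funext hV
    rw [this]
    exact h3
  · -- dominance
    intro x hx
    set g : ℝ → ℝ := fun y => V y + y - L with hg
    have hgd : ∀ y : ℝ, 0 < y → HasDerivAt g (-(y / a) ^ (β₂ - 1) + 1) y := by
      intro y hy
      simpa [hg] using ((hderiv y hy).add (hasDerivAt_id y)).sub_const L
    have hgmono : StrictMonoOn g (Set.Ici a) := by
      apply strictMonoOn_of_deriv_pos (convex_Ici a)
      · exact fun y hy => ((hgd y (lt_of_lt_of_le ha0 hy)).continuousAt).continuousWithinAt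
      · intro y hy
        rw [hint] at hy
        have hy0 : 0 < y := lt_trans ha0 hy
        rw [(hgd y hy0).deriv]
        have h1 : 1 < y / a := (one_lt_div ha0).mpr hy
        have := Real.rpow_lt_one_of_one_lt_of_neg h1 hb1
        linarith
    have hga : g a = 0 := by
      simp only [hg, hV a, div_self (ne_of_gt ha0), Real.one_rpow]
      ring
    have := hgmono (Set.self_mem_Ici) (Set.mem_Ici.mpr hx.le) hx
    rw [hga] at this
    simp only [hg] at this
    linarith
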